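/- arXiv:2412.18595 — 5 statements merged into one kernel-verified Lean document; each statement's English description precedes it below -/
import Mathlib

section
/- For any connected graph G and any edge e of G, the basis number of the contraction G/e is at most the basis number of G. -/
open scoped Classical

noncomputable section

/-- Helper: quotients of finite types are finite. -/
noncomputable def quotFintype {α : Type} [Fintype α] (r : α → α → Prop) : Fintype (Quot r) :=
  Fintype.ofSurjective (Quot.mk r) fun q => Quot.exists_rep q

/-- A finite multigraph.  Each edge `e` carries an (arbitrarily chosen) ordering of its two
endpoints, `fst e` and `snd e`; a loop is an edge with `fst e = snd e`. -/
structure Multigraph where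
  V : Type
  E : Type
  fintV : Fintype V
  fintE : Fintype E
  fst : E → V
  snd : E → V

attribute [instance] Multigraph.fintV Multigraph.fintE

namespace Multigraph

variable (G : Multigraph)

/-- Incidence of a vertex and an edge, modulo 2 (a loop is incident twice, i.e. 0 mod 2). -/
noncomputable def inc (v : G.V) (e : G.E) : ZMod 2 :=
  (if G.fst e = v then 1 else 0) + (if G.snd e = v then 1 else 0)

/-- The cycle space of `G` over `F_2`: characteristic vectors of edge sets in which every
vertex has even degree (i.e. Eulerian subgraphs), with addition = symmetric difference. -/
noncomputable def cycleSpace : Submodule (ZMod 2) (G.E → ZMod 2) where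
  carrier := {x | ∀ v : G.V, ∑ e : G.E, G.inc v e * x e = 0}
  zero_mem' := by intro v; simp
  add_mem' := by
    intro a b ha hb v
    have h : ∀ e : G.E, G.inc v e * (a + b) e = G.inc v e * a e + G.inc v e * b e := by
      intro e
      show G.inc v e * (a e + b e) = G.inc v e * a e + G.inc v e * b e
      ring
    rw [Finset.sum_congr rfl fun e _ => h e, Finset.sum_add_distrib, ha v, hb v, add_zero]
  smul_mem' := by
    intro c x hx v
    have h : ∀ e : G.E, G.inc v e * (c • x) e = c * (G.inc v e * x e) := by
      intro e
      show G.inc v e * (c * x e) = c * (G.inc v e * x e)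
      ring
    rw [Finset.sum_congr rfl fun e _ => h e, ← Finset.mul_sum, hx v, mul_zero]

/-- The charge of an edge `e` with respect to a collection `B` of (characteristic vectors of)
subgraphs: the number of members of `B` containing `e`. -/
noncomputable def charge (B : Finset (G.E → ZMod 2)) (e : G.E) : ℕ :=
  (B.filter fun x => x e ≠ 0).card

/-- `B` is a basis of the cycle space of `G`. -/
def IsCycleBasis (B : Finset (G.E → ZMod 2)) : Prop :=
  (∀ x ∈ B, x ∈ G.cycleSpace) ∧
    LinearIndependent (ZMod 2) (fun x : B => (x : G.E → ZMod 2)) ∧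
    Submodule.span (ZMod 2) (B : Set (G.E → ZMod 2)) = G.cycleSpace

/-- `B` is a `k`-basis: a basis of the cycle space in which every edge has charge at most `k`. -/
def IsKBasis (k : ℕ) (B : Finset (G.E → ZMod 2)) : Prop :=
  G.IsCycleBasis B ∧ ∀ e : G.E, G.charge B e ≤ k

/-- The basis number of `G`: the least `k` such that `G` has a `k`-basis. -/
noncomputable def basisNum : ℕ := sInf {k | ∃ B, G.IsKBasis k B}

/-- Adjacency of two vertices. -/
def Adj (a b : G.V) : Prop :=
  ∃ e : G.E, (G.fst e = a ∧ G.snd e = b) ∨ (G.fst e = b ∧ G.snd e = a)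

/-- Connectivity. -/
def Connected : Prop :=
  Nonempty G.V ∧ ∀ a b : G.V, Relation.ReflTransGen G.Adj a b

/-- Degree of a vertex (a loop counts twice). -/
noncomputable def degree (v : G.V) : ℕ :=
  ∑ e : G.E, ((if G.fst e = v then 1 else 0) + (if G.snd e = v then 1 else 0))

/-- The subgraph with the same vertex set and edge set restricted to `S`. -/
noncomputable def edgeRestrict (S : Set G.E) : Multigraph where
  V := G.V
  E := S
  fintV := G.fintV
  fintE := (Set.toFinite S).fintype
  fst := fun e => G.fst e.1
  snd := fun e => G.snd e.1

/-- Deletion of a vertex (and all edges incident with it). -/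
noncomputable def deleteVertex (v : G.V) : Multigraph where
  V := {u : G.V // u ≠ v}
  E := {e : G.E // G.fst e ≠ v ∧ G.snd e ≠ v}
  fintV := by classical exact inferInstance
  fintE := by classical exact inferInstance
  fst := fun e => ⟨G.fst e.1, e.2.1⟩
  snd := fun e => ⟨G.snd e.1, e.2.2⟩

/-- `G` is 2-connected: at least 3 vertices, connected, and no cutvertex. -/
def TwoConnected : Prop :=
  G.Connected ∧ 3 ≤ Nat.card G.V ∧ ∀ v : G.V, (G.deleteVertex v).Connected

/-- A cycle of length `n` in `G`: `n` distinct vertices and `n` distinct edges, with edge `i`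
joining vertex `i` to vertex `i+1` (cyclically). -/
def IsCycleOn (n : ℕ) (vs : Fin n → G.V) (es : Fin n → G.E) : Prop :=
  Function.Injective vs ∧ Function.Injective es ∧
    ∀ i : Fin n,
      (G.fst (es i) = vs i ∧ G.snd (es i) = vs (finRotate n i)) ∨
      (G.fst (es i) = vs (finRotate n i) ∧ G.snd (es i) = vs i)

/-- A path with `n` edges, given by its (distinct) vertices and its edges. -/
def IsPathOn (n : ℕ) (vs : Fin (n + 1) → G.V) (es : Fin n → G.E) : Prop :=
  Function.Injective vs ∧
    ∀ i : Fin n,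
      (G.fst (es i) = vs i.castSucc ∧ G.snd (es i) = vs i.succ) ∨
      (G.fst (es i) = vs i.succ ∧ G.snd (es i) = vs i.castSucc)

/-- `p` is the characteristic vector of (the edge set of) a path from `s` to `t`. -/
def IsPathVec (s t : G.V) (p : G.E → ZMod 2) : Prop :=
  ∃ (n : ℕ) (vs : Fin (n + 1) → G.V) (es : Fin n → G.E),
    G.IsPathOn n vs es ∧ vs 0 = s ∧ vs (Fin.last n) = t ∧
      ∀ f : G.E, p f ≠ 0 ↔ ∃ i, es i = f

/-- Two edges lie in a common block: they are equal, or they lie on a common cycle. -/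
def BlockRel (e f : G.E) : Prop :=
  e = f ∨ ∃ (n : ℕ) (vs : Fin n → G.V) (es : Fin n → G.E),
    1 ≤ n ∧ G.IsCycleOn n vs es ∧ (∃ i, es i = e) ∧ (∃ j, es j = f)

/-- `T` is a spanning tree of `G` (as an edge set): the spanning subgraph with edge set `T`
is connected and has no cycles. -/
def IsSpanningTree (T : Set G.E) : Prop :=
  (G.edgeRestrict T).Connected ∧
    ∀ (n : ℕ) (vs : Fin n → (G.edgeRestrict T).V) (es : Fin n → (G.edgeRestrict T).E),
      (G.edgeRestrict T).IsCycleOn n vs es → n = 0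

/-- Contraction of the edge `e`: identify its two endpoints and delete `e`. -/
noncomputable def contract (e : G.E) : Multigraph where
  V := Quot (fun a b : G.V => a = G.fst e ∧ b = G.snd e)
  E := {f : G.E // f ≠ e}
  fintV := quotFintype _
  fintE := by classical exact inferInstance
  fst := fun f => Quot.mk _ (G.fst f.1)
  snd := fun f => Quot.mk _ (G.snd f.1)

/-- Addition of a (possibly parallel) edge joining `u` and `v`. -/
noncomputable def addEdge (u v : G.V) : Multigraph where
  V := G.V
  E := Option G.E
  fintV := G.fintV
  fintE := inferInstance
  fst := fun o => o.elim u G.fst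
  snd := fun o => o.elim v G.snd

/-- Subdivision of the edge `e`: delete `e` and add a new vertex (`none`) joined to both
endpoints of `e`. -/
noncomputable def subdivide (e : G.E) : Multigraph where
  V := Option G.V
  E := {f : G.E // f ≠ e} ⊕ Bool
  fintV := inferInstance
  fintE := by classical exact inferInstance
  fst := Sum.elim (fun f => some (G.fst f.1))
    (fun b => cond b (some (G.fst e)) (some (G.snd e)))
  snd := Sum.elim (fun f => some (G.snd f.1)) (fun _ => none)

/-- Replacement of the edge `e` of `G` by the graph `H` with terminals `s`, `t`:
delete `e`, take the disjoint union with `H`, and identify the endpoints of `e`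
with the terminals. -/
noncomputable def replaceEdge (e : G.E) (H : Multigraph) (s t : H.V) : Multigraph where
  V := Quot (fun a b : G.V ⊕ H.V =>
        (a = Sum.inl (G.fst e) ∧ b = Sum.inr s) ∨ (a = Sum.inl (G.snd e) ∧ b = Sum.inr t))
  E := {f : G.E // f ≠ e} ⊕ H.E
  fintV := quotFintype _
  fintE := by classical exact inferInstance
  fst := Sum.elim (fun f => Quot.mk _ (Sum.inl (G.fst f.1)))
    (fun f => Quot.mk _ (Sum.inr (H.fst f)))
  snd := Sum.elim (fun f => Quot.mk _ (Sum.inl (G.snd f.1)))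
    (fun f => Quot.mk _ (Sum.inr (H.snd f)))

/-! ### Combinatorial embeddings (rotation systems) and planarity -/

/-- Darts: each edge gives two darts. -/
def Dart : Type := G.E × Bool

noncomputable instance : Fintype G.Dart := inferInstanceAs (Fintype (G.E × Bool))

/-- The vertex at which a dart is based. -/
def dartVertex (d : G.Dart) : G.V := cond d.2 (G.fst d.1) (G.snd d.1)

/-- The involution exchanging the two darts of each edge. -/
def dartFlip : Equiv.Perm G.Dart where
  toFun d := (d.1, !d.2)
  invFun d := (d.1, !d.2)
  left_inv := fun d => by cases d; simp <;> rfl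
  right_inv := fun d => by cases d; simp <;> rfl

/-- `σ` is a rotation system: its orbits are exactly the sets of darts based at a
common vertex. -/
def IsRotation (σ : Equiv.Perm G.Dart) : Prop :=
  ∀ d d' : G.Dart, σ.SameCycle d d' ↔ G.dartVertex d = G.dartVertex d'

/-- The face permutation of a rotation system. -/
def facePerm (σ : Equiv.Perm G.Dart) : Equiv.Perm G.Dart := G.dartFlip.trans σ

/-- The faces of the embedding given by `σ`: orbits of the face permutation. -/
def Faces (σ : Equiv.Perm G.Dart) : Type := Quot (G.facePerm σ).SameCycle

/-- The face containing a given dart. -/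
def faceOf (σ : Equiv.Perm G.Dart) (d : G.Dart) : G.Faces σ := Quot.mk _ d

noncomputable def numFaces (σ : Equiv.Perm G.Dart) : ℕ := Nat.card (G.Faces σ)

noncomputable def numComponents : ℕ := Nat.card (Quot G.Adj)

/-- The number of connected components containing at least one edge. -/
noncomputable def numEdgedComponents : ℕ :=
  Nat.card {c : Quot G.Adj // ∃ e : G.E, Quot.mk G.Adj (G.fst e) = c}

/-- `σ` is a planar (genus zero) embedding, by Euler's formula
(componentwise `V - E + F = 2`, where components without edges contribute one global face). -/
def IsPlanarRotation (σ : Equiv.Perm G.Dart) : Prop :=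
  G.IsRotation σ ∧
    G.numFaces σ + Nat.card G.V = Nat.card G.E + G.numComponents + G.numEdgedComponents

/-- `G` is planar: it admits a genus-zero combinatorial embedding. -/
def IsPlanar : Prop := ∃ σ : Equiv.Perm G.Dart, G.IsPlanarRotation σ

/-- The boundary of a face, as an element of `F_2^E`: the edges having exactly one of
their two darts on the face. -/
noncomputable def faceBoundary (σ : Equiv.Perm G.Dart) (c : G.Faces σ) : G.E → ZMod 2 :=
  fun e => ∑ b : Bool, if G.faceOf σ (e, b) = c then 1 else 0

/-- The vertex `v` lies on the face `c`. -/
def VertexOnFace (σ : Equiv.Perm G.Dart) (v : G.V) (c : G.Faces σ) : Prop :=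
  ∃ d : G.Dart, G.faceOf σ d = c ∧ G.dartVertex d = v

/-- The edge `e` lies on the face `c`. -/
def EdgeOnFace (σ : Equiv.Perm G.Dart) (e : G.E) (c : G.Faces σ) : Prop :=
  ∃ b : Bool, G.faceOf σ (e, b) = c

end Multigraph

section ContractAux
open Multigraph

variable (G : Multigraph) (e : G.E)

lemma mem_cycleSpace_iff {H : Multigraph} {x : H.E → ZMod 2} :
    x ∈ H.cycleSpace ↔ ∀ v, ∑ f : H.E, H.inc v f * x f = 0 := Iff.rfl

/-- The projection forgetting the coordinate `e`. -/
noncomputable def piE : (G.E → ZMod 2) →ₗ[ZMod 2] ((G.contract e).E → ZMod 2) :=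
  LinearMap.funLeft (ZMod 2) (ZMod 2) (fun f : (G.contract e).E => f.1)

lemma piE_apply (x : G.E → ZMod 2) (f : (G.contract e).E) : piE G e x f = x f.1 := rfl

/-- The quotient map on vertices. -/
def mkQ (u : G.V) : (G.contract e).V := Quot.mk _ u

lemma mkQ_fst_eq_snd : mkQ G e (G.fst e) = mkQ G e (G.snd e) := Quot.sound ⟨rfl, rfl⟩

lemma mkQ_eq_iff (u v : G.V) :
    mkQ G e u = mkQ G e v ↔
      (u = v ∨ (u = G.fst e ∧ v = G.snd e) ∨ (u = G.snd e ∧ v = G.fst e)) := by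
  constructor
  · intro h
    have h' : Relation.EqvGen (fun a b : G.V => a = G.fst e ∧ b = G.snd e) u v :=
      Quot.eq.mp h
    clear h
    induction h' with
    | rel a b hab => exact Or.inr (Or.inl ⟨hab.1, hab.2⟩)
    | refl a => exact Or.inl rfl
    | symm a b _ ih =>
        rcases ih with h | ⟨h1, h2⟩ | ⟨h1, h2⟩
        · exact Or.inl h.symm
        · exact Or.inr (Or.inr ⟨h2, h1⟩)
        · exact Or.inr (Or.inl ⟨h2, h1⟩)
    | trans a b c _ _ ih1 ih2 =>
        rcases ih1 with h | ⟨h1, h2⟩ | ⟨h1, h2⟩ <;>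
          rcases ih2 with g | ⟨g1, g2⟩ | ⟨g1, g2⟩ <;> subst_vars <;> tauto
  · rintro (rfl | ⟨rfl, rfl⟩ | ⟨rfl, rfl⟩)
    · rfl
    · exact mkQ_fst_eq_snd G e
    · exact (mkQ_fst_eq_snd G e).symm

lemma sum_ne (g : G.E → ZMod 2) :
    ∑ f : (G.contract e).E, g f.1 + g e = ∑ f : G.E, g f := by
  rw [← Finset.sum_erase_add Finset.univ g (Finset.mem_univ e)]
  congr 1
  refine Finset.sum_bij (fun (f : (G.contract e).E) _ => f.1) ?_ ?_ ?_ ?_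
  · intro f _
    exact Finset.mem_erase.mpr ⟨f.2, Finset.mem_univ _⟩
  · intro f _ f' _ hff
    exact Subtype.ext hff
  · intro f hf
    exact ⟨⟨f, (Finset.mem_erase.mp hf).1⟩, Finset.mem_univ _, rfl⟩
  · intro f _
    rfl

lemma inc_key (w : (G.contract e).V) (f : G.E) :
    ∑ u : G.V, (if mkQ G e u = w then (1 : ZMod 2) else 0) * G.inc u f
      = (if mkQ G e (G.fst f) = w then 1 else 0)
        + (if mkQ G e (G.snd f) = w then 1 else 0) := by
  simp only [Multigraph.inc, mul_add, mul_ite, mul_one, mul_zero, Finset.sum_add_distrib,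
    Finset.sum_ite_eq, Finset.mem_univ, if_true]

lemma inc_contract (w : (G.contract e).V) (f : (G.contract e).E) :
    (G.contract e).inc w f
      = ∑ u : G.V, (if mkQ G e u = w then (1 : ZMod 2) else 0) * G.inc u f.1 := by
  rw [inc_key]; rfl

lemma inc_key_e (w : (G.contract e).V) :
    ∑ u : G.V, (if mkQ G e u = w then (1 : ZMod 2) else 0) * G.inc u e = 0 := by
  rw [inc_key, mkQ_fst_eq_snd]
  split <;> decide

/-- Swapping the double sum. -/
lemma swap_sum (w : (G.contract e).V) (y : (G.contract e).E → ZMod 2) :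
    ∑ f : (G.contract e).E, (G.contract e).inc w f * y f
      = ∑ u : G.V, (if mkQ G e u = w then (1 : ZMod 2) else 0)
          * ∑ f : (G.contract e).E, G.inc u f.1 * y f := by
  simp only [inc_contract, Finset.sum_mul, Finset.mul_sum]
  rw [Finset.sum_comm]
  apply Finset.sum_congr rfl
  intro u _
  apply Finset.sum_congr rfl
  intro f _
  ring

lemma piE_mem_cycleSpace {x : G.E → ZMod 2} (hx : x ∈ G.cycleSpace) :
    piE G e x ∈ (G.contract e).cycleSpace := by
  rw [mem_cycleSpace_iff]
  intro w
  rw [swap_sum]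
  have hsub : ∀ u : G.V,
      ∑ f : (G.contract e).E, G.inc u f.1 * (piE G e x) f = - (G.inc u e * x e) := by
    intro u
    have h := sum_ne G e (fun f => G.inc u f * x f)
    have h0 : (∑ f : G.E, G.inc u f * x f) = 0 := hx u
    rw [h0] at h
    have hthis : ∑ f : (G.contract e).E, G.inc u f.1 * x f.1 = - (G.inc u e * x e) := by
      linear_combination h
    exact hthis
  calc ∑ u : G.V, (if mkQ G e u = w then (1 : ZMod 2) else 0)
          * ∑ f : (G.contract e).E, G.inc u f.1 * (piE G e x) f
      = ∑ u : G.V, -((if mkQ G e u = w then (1 : ZMod 2) else 0) * G.inc u e * x e) := by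
        apply Finset.sum_congr rfl
        intro u _
        rw [hsub u]
        ring
    _ = -((∑ u : G.V, (if mkQ G e u = w then (1 : ZMod 2) else 0) * G.inc u e) * x e) := by
        rw [Finset.sum_neg_distrib, Finset.sum_mul]
    _ = 0 := by rw [inc_key_e]; ring

/-- The partial-degree sum with respect to a vector on the contracted graph. -/
noncomputable def Dsum (y : (G.contract e).E → ZMod 2) (v : G.V) : ZMod 2 :=
  ∑ f : (G.contract e).E, G.inc v f.1 * y f

lemma chiD {y : (G.contract e).E → ZMod 2} (hy : y ∈ (G.contract e).cycleSpace)
    (w : (G.contract e).V) :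
    ∑ u : G.V, (if mkQ G e u = w then (1 : ZMod 2) else 0) * Dsum G e y u = 0 := by
  unfold Dsum
  rw [← swap_sum]
  exact hy w

lemma Dsum_eq_zero {y : (G.contract e).E → ZMod 2} (hy : y ∈ (G.contract e).cycleSpace)
    (v : G.V) (hv : ∀ u, mkQ G e u = mkQ G e v → u = v) : Dsum G e y v = 0 := by
  have h := chiD G e hy (mkQ G e v)
  rw [Finset.sum_congr rfl (fun u _ => show
      (if mkQ G e u = mkQ G e v then (1 : ZMod 2) else 0) * Dsum G e y u
        = if v = u then Dsum G e y u else 0 by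
    by_cases hu : mkQ G e u = mkQ G e v
    · rw [if_pos hu, if_pos (hv u hu).symm, one_mul]
    · rw [if_neg hu, if_neg (fun huv => hu (by rw [huv])), zero_mul])] at h
  rwa [Finset.sum_ite_eq, if_pos (Finset.mem_univ v)] at h

lemma Dsum_add_eq_zero {y : (G.contract e).E → ZMod 2} (hy : y ∈ (G.contract e).cycleSpace)
    (hab : G.fst e ≠ G.snd e) :
    Dsum G e y (G.fst e) + Dsum G e y (G.snd e) = 0 := by
  have h := chiD G e hy (mkQ G e (G.fst e))
  have hrw : ∀ u : G.V,
      (if mkQ G e u = mkQ G e (G.fst e) then (1 : ZMod 2) else 0) * Dsum G e y u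
        = (if G.fst e = u then Dsum G e y u else 0)
          + (if G.snd e = u then Dsum G e y u else 0) := by
    intro u
    have hiff : mkQ G e u = mkQ G e (G.fst e) ↔ (u = G.fst e ∨ u = G.snd e) := by
      rw [mkQ_eq_iff]
      constructor
      · rintro (h' | ⟨h1, h2⟩ | ⟨h1, h2⟩)
        · exact Or.inl h'
        · exact Or.inl h1
        · exact Or.inr h1
      · rintro (rfl | rfl)
        · exact Or.inl rfl
        · exact Or.inr (Or.inr ⟨rfl, rfl⟩)
    by_cases h1 : G.fst e = u
    · have h2 : ¬ G.snd e = u := fun h2 => hab (h1.trans h2.symm)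
      rw [if_pos (hiff.mpr (Or.inl h1.symm)), if_pos h1, if_neg h2, one_mul, add_zero]
    · by_cases h2 : G.snd e = u
      · rw [if_pos (hiff.mpr (Or.inr h2.symm)), if_neg h1, if_pos h2, one_mul, zero_add]
      · rw [if_neg (fun hc : mkQ G e u = mkQ G e (G.fst e) => by
            rcases hiff.mp hc with h' | h'
            · exact h1 h'.symm
            · exact h2 h'.symm),
          if_neg h1, if_neg h2, zero_mul, add_zero]
  rw [Finset.sum_congr rfl (fun u _ => hrw u), Finset.sum_add_distrib,
    Finset.sum_ite_eq, Finset.sum_ite_eq, if_pos (Finset.mem_univ _),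
    if_pos (Finset.mem_univ _)] at h
  exact h

lemma piE_surjOn {y : (G.contract e).E → ZMod 2} (hy : y ∈ (G.contract e).cycleSpace) :
    ∃ x ∈ G.cycleSpace, piE G e x = y := by
  classical
  set t := Dsum G e y (G.fst e) with ht
  set x : G.E → ZMod 2 := fun f => if h : f = e then t else y ⟨f, h⟩ with hxdef
  have hx1 : ∀ f : (G.contract e).E, x f.1 = y f := by
    intro f
    show (if h : f.1 = e then t else y ⟨f.1, h⟩) = y f
    rw [dif_neg f.2]
    rfl
  have hxe : x e = t := by
    show (if h : e = e then t else y ⟨e, h⟩) = t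
    rw [dif_pos rfl]
  refine ⟨x, ?_, ?_⟩
  · rw [mem_cycleSpace_iff]
    intro v
    rw [← sum_ne G e (fun f => G.inc v f * x f)]
    have hD : ∑ f : (G.contract e).E, G.inc v f.1 * x f.1 = Dsum G e y v := by
      apply Finset.sum_congr rfl
      intro f _
      rw [hx1]
    rw [hD, hxe]
    by_cases hab : G.fst e = G.snd e
    · have hall : ∀ u, Dsum G e y u = 0 := by
        intro u
        apply Dsum_eq_zero G e hy
        intro u' hu'
        rcases (mkQ_eq_iff G e u' u).mp hu' with h | ⟨h1, h2⟩ | ⟨h1, h2⟩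
        · exact h
        · exact h1.trans (hab.trans h2.symm)
        · exact h1.trans (hab.symm.trans h2.symm)
      rw [hall v, ht, hall (G.fst e), mul_zero, add_zero]
    · by_cases hva : v = G.fst e
      · have hinc : G.inc v e = 1 := by
          show (if G.fst e = v then (1 : ZMod 2) else 0) + (if G.snd e = v then 1 else 0) = 1
          rw [if_pos hva.symm, if_neg (fun h => hab (hva.symm.trans h.symm)), add_zero]
        rw [hinc, one_mul, ht, hva]
        exact CharTwo.add_self_eq_zero _
      · by_cases hvb : v = G.snd e
        · have hinc : G.inc v e = 1 := by
            show (if G.fst e = v then (1 : ZMod 2) else 0) + (if G.snd e = v then 1 else 0) = 1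
            rw [if_pos hvb.symm, if_neg (fun h => hab (h.trans hvb)), zero_add]
          rw [hinc, one_mul, ht, hvb, add_comm]
          exact Dsum_add_eq_zero G e hy hab
        · have h0 : Dsum G e y v = 0 := by
            apply Dsum_eq_zero G e hy
            intro u hu
            rcases (mkQ_eq_iff G e u v).mp hu with h | ⟨h1, h2⟩ | ⟨h1, h2⟩
            · exact h
            · exact absurd h2 hvb
            · exact absurd h2 hva
          have hinc : G.inc v e = 0 := by
            show (if G.fst e = v then (1 : ZMod 2) else 0) + (if G.snd e = v then 1 else 0) = 0
            rw [if_neg (fun h => hva h.symm), if_neg (fun h => hvb h.symm), add_zero]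
          rw [h0, hinc, zero_mul, add_zero]
  · funext f
    rw [piE_apply, hx1]

lemma map_cycleSpace :
    Submodule.map (piE G e) G.cycleSpace = (G.contract e).cycleSpace := by
  apply le_antisymm
  · rintro y ⟨x, hx, rfl⟩
    exact piE_mem_cycleSpace G e hx
  · intro y hy
    obtain ⟨x, hx, hxy⟩ := piE_surjOn G e hy
    exact ⟨x, hx, hxy⟩

set_option maxHeartbeats 2000000 in
lemma exists_kbasis (H : Multigraph) : ∃ k B, H.IsKBasis k B := by
  classical
  obtain ⟨b, hsub, hspan, hind⟩ :=
    exists_linearIndependent (ZMod 2) (↑H.cycleSpace : Set (H.E → ZMod 2))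
  have hbfin : b.Finite := Set.toFinite b
  refine ⟨hbfin.toFinset.card, hbfin.toFinset, ⟨⟨?_, ?_, ?_⟩, ?_⟩⟩
  · intro x hx
    exact hsub (hbfin.mem_toFinset.mp hx)
  · exact hind.comp (fun x => ⟨x.1, hbfin.mem_toFinset.mp x.2⟩)
      (fun a b h => Subtype.ext (Subtype.mk_eq_mk.mp h))
  · rw [hbfin.coe_toFinset, hspan, Submodule.span_eq]
  · intro f
    exact Finset.card_filter_le _ _

lemma charge_le (B : Finset (G.E → ZMod 2)) (B' : Finset ((G.contract e).E → ZMod 2))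
    (h : ∀ x ∈ B', ∃ y ∈ B, piE G e y = x) (f : (G.contract e).E) :
    (G.contract e).charge B' f ≤ G.charge B f.1 := by
  classical
  unfold Multigraph.charge
  apply Finset.card_le_card_of_injOn
      (fun x => if hx : ∃ y ∈ B, piE G e y = x then hx.choose else 0)
  · intro x hx
    simp only [Finset.mem_coe, Finset.mem_filter] at hx ⊢
    have hex : ∃ y ∈ B, piE G e y = x := h x hx.1
    rw [dif_pos hex]
    obtain ⟨hy1, hy2⟩ := hex.choose_spec
    refine ⟨hy1, ?_⟩
    have hfx : hex.choose f.1 = x f := congrFun hy2 f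
    rw [hfx]
    exact hx.2
  · intro x hx x' hx' hxx
    simp only [Finset.coe_filter, Set.mem_setOf_eq] at hx hx'
    have hex : ∃ y ∈ B, piE G e y = x := h x hx.1
    have hex' : ∃ y ∈ B, piE G e y = x' := h x' hx'.1
    simp only at hxx
    rw [dif_pos hex, dif_pos hex'] at hxx
    rw [← hex.choose_spec.2, ← hex'.choose_spec.2, hxx]

end ContractAux

set_option maxHeartbeats 2000000 in
/-- For any connected graph `G` and any edge `e` of `G`, the basis number of
the contraction `G/e` is at most the basis number of `G`. -/
theorem basisNum_contract_le (G : Multigraph) (hG : G.Connected) (e : G.E) :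
    (G.contract e).basisNum ≤ G.basisNum := by
  classical
  obtain ⟨k0, B0, hB0⟩ := exists_kbasis G
  have hne : {k | ∃ B, G.IsKBasis k B}.Nonempty := ⟨k0, B0, hB0⟩
  obtain ⟨B, hB⟩ : ∃ B, G.IsKBasis G.basisNum B := Nat.sInf_mem hne
  obtain ⟨b, hsub, hspan, hind⟩ :=
    exists_linearIndependent (ZMod 2) (⇑(piE G e) '' ↑B)
  have hbfin : b.Finite := Set.toFinite b
  have hspan2 : Submodule.span (ZMod 2) b = (G.contract e).cycleSpace := by
    rw [hspan, Submodule.span_image, hB.1.2.2, map_cycleSpace]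
  apply Nat.sInf_le
  refine ⟨hbfin.toFinset, ⟨⟨?_, ?_, ?_⟩, ?_⟩⟩
  · intro x hx
    obtain ⟨y, hy, rfl⟩ := hsub (hbfin.mem_toFinset.mp hx)
    exact piE_mem_cycleSpace G e (hB.1.1 y hy)
  · exact hind.comp (fun x => ⟨x.1, hbfin.mem_toFinset.mp x.2⟩)
      (fun a b h => Subtype.ext (Subtype.mk_eq_mk.mp h))
  · rw [hbfin.coe_toFinset]
    exact hspan2
  · intro f
    refine le_trans (charge_le G e B hbfin.toFinset ?_ f) (hB.2 f.1)
    intro x hx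
    obtain ⟨y, hy, hyx⟩ := hsub (hbfin.mem_toFinset.mp hx)
    exact ⟨y, hy, hyx⟩
end
end

section
/- For any connected graph G and any pair of vertices u,v, the basis number of the graph G+uv obtained by adding an edge uv (possibly parallel) satisfies b(G+uv) ≤ b(G)+1. -/
open scoped Classical

noncomputable section

namespace MyAux

open Multigraph

lemma zmod2_add_self : ∀ x : ZMod 2, x + x = 0 := by decide

/-- Existence of a vector with prescribed boundary δu + δv, by connectivity. -/
lemma exists_boundary (G : Multigraph) (hG : G.Connected) (u v : G.V) :
    ∃ p : G.E → ZMod 2, ∀ w : G.V,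
      ∑ e : G.E, G.inc w e * p e =
        (if u = w then 1 else 0) + (if v = w then 1 else 0) := by
  classical
  have h : Relation.ReflTransGen G.Adj u v := hG.2 u v
  induction h with
  | refl =>
      refine ⟨0, fun w => ?_⟩
      simp only [Pi.zero_apply, mul_zero, Finset.sum_const_zero]
      exact (zmod2_add_self _).symm
  | @tail b c hub hbc ih =>
      obtain ⟨p, hp⟩ := ih
      obtain ⟨e0, he0⟩ := hbc
      set q : G.E → ZMod 2 := fun f => if f = e0 then 1 else 0 with hq
      refine ⟨p + q, fun w => ?_⟩
      have hsplit : ∀ e : G.E,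
          G.inc w e * (p + q) e
            = G.inc w e * p e + (if e = e0 then G.inc w e else 0) := by
        intro e
        show G.inc w e * (p e + q e) = _
        by_cases h : e = e0 <;> simp [hq, h, mul_add]
      rw [Finset.sum_congr rfl fun e _ => hsplit e, Finset.sum_add_distrib, hp w,
        Finset.sum_ite_eq' Finset.univ e0 (fun e => G.inc w e)]
      simp only [Finset.mem_univ, if_true]
      have hinc : G.inc w e0 = (if b = w then 1 else 0) + (if c = w then 1 else 0) := by
        rcases he0 with ⟨h1, h2⟩ | ⟨h1, h2⟩ <;> unfold Multigraph.inc <;> rw [h1, h2]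
        ring
      rw [hinc]
      by_cases h1 : u = w <;> by_cases h2 : b = w <;> by_cases h3 : c = w <;>
        simp [h1, h2, h3] <;> decide

/-- Every multigraph has some k-basis. -/
lemma exists_kBasis (G : Multigraph) : ∃ k B, G.IsKBasis k B := by
  classical
  obtain ⟨b, hbsub, hbspan, hbli⟩ :=
    exists_linearIndependent (ZMod 2) ((G.cycleSpace : Set (G.E → ZMod 2)))
  have hfin : b.Finite := Set.Finite.subset (Set.finite_univ) (Set.subset_univ _)
  refine ⟨hfin.toFinset.card, hfin.toFinset, ⟨?_, ?_, ?_⟩, ?_⟩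
  · intro x hx
    exact hbsub (hfin.mem_toFinset.mp hx)
  · have hset : (hfin.toFinset : Set (G.E → ZMod 2)) = b := hfin.coe_toFinset
    rw [← hset] at hbli
    exact hbli
  · rw [hfin.coe_toFinset, hbspan, Submodule.span_eq]
  · intro e
    exact Finset.card_filter_le _ _

end MyAux

/-- For any connected graph `G` and any pair of vertices `u, v`, the basis
number of the graph `G + uv` obtained by adding an edge `uv` (possibly parallel) satisfies
`b(G + uv) ≤ b(G) + 1`. -/
theorem basisNum_addEdge_le (G : Multigraph) (hG : G.Connected) (u v : G.V) :
    (G.addEdge u v).basisNum ≤ G.basisNum + 1 := by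
  classical
  obtain ⟨p, hp⟩ := MyAux.exists_boundary G hG u v
  have hne : {k | ∃ B, G.IsKBasis k B}.Nonempty := by
    obtain ⟨k, B, h⟩ := MyAux.exists_kBasis G
    exact ⟨k, B, h⟩
  obtain ⟨B, ⟨hBmem, hBli, hBspan⟩, hBch⟩ :
      ∃ B, G.IsKBasis G.basisNum B := Nat.sInf_mem hne
  -- the extension-by-zero linear map
  let extL : (G.E → ZMod 2) →ₗ[ZMod 2] (Option G.E → ZMod 2) :=
    { toFun := fun x o => o.elim 0 x
      map_add' := fun x y => funext fun o => by cases o <;> rfl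
      map_smul' := fun c x => funext fun o => by cases o <;> simp }
  have hext_inj : Function.Injective extL := fun x y h => funext fun e => congrFun h (some e)
  -- the new cycle through the added edge
  let C : Option G.E → ZMod 2 := fun o => o.elim 1 p
  let B' : Finset (Option G.E → ZMod 2) := insert C (B.image extL)
  -- incidence bookkeeping
  have hsum : ∀ (x : Option G.E → ZMod 2) (w : G.V),
      ∑ o : Option G.E, (G.addEdge u v).inc w o * x o
        = ((if u = w then 1 else 0) + (if v = w then 1 else 0)) * x none
            + ∑ e : G.E, G.inc w e * x (some e) := by
    intro x w
    rw [Fintype.sum_option]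
    rfl
  have memH_iff : ∀ x : Option G.E → ZMod 2,
      x ∈ (G.addEdge u v).cycleSpace ↔
        ∀ w : G.V, ∑ o : Option G.E, (G.addEdge u v).inc w o * x o = 0 :=
    fun x => Iff.rfl
  have memG_iff : ∀ x : G.E → ZMod 2,
      x ∈ G.cycleSpace ↔ ∀ w : G.V, ∑ e : G.E, G.inc w e * x e = 0 :=
    fun x => Iff.rfl
  -- all members of B' are in the cycle space of G + uv
  have hmemH : ∀ x ∈ B', x ∈ (G.addEdge u v).cycleSpace := by
    intro x hx
    rcases Finset.mem_insert.mp hx with rfl | hx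
    · rw [memH_iff]
      intro w
      rw [hsum]
      show _ * (1 : ZMod 2) + ∑ e : G.E, G.inc w e * p e = 0
      rw [mul_one, hp w]
      exact MyAux.zmod2_add_self _
    · obtain ⟨y, hyB, rfl⟩ := Finset.mem_image.mp hx
      rw [memH_iff]
      intro w
      rw [hsum]
      show _ * (0 : ZMod 2) + ∑ e : G.E, G.inc w e * y e = 0
      rw [mul_zero, zero_add]
      exact (memG_iff y).mp (hBmem y hyB) w
  -- C is not in the span of the extended old basis
  have hCnot : C ∉ Submodule.span (ZMod 2) (⇑extL '' (B : Set (G.E → ZMod 2))) := by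
    intro h
    have hker : Submodule.span (ZMod 2) (⇑extL '' (B : Set (G.E → ZMod 2))) ≤
        LinearMap.ker (LinearMap.proj (R := ZMod 2) (φ := fun _ : Option G.E => ZMod 2) none) := by
      rw [Submodule.span_le]
      rintro x ⟨y, -, rfl⟩
      show extL y none = 0
      rfl
    have h1 : C none = 0 := hker h
    exact one_ne_zero h1
  -- linear independence of B'
  have hli0 : LinearIndependent (ZMod 2)
      (Subtype.val : {x : G.E → ZMod 2 // x ∈ (B : Set (G.E → ZMod 2))} → (G.E → ZMod 2)) := hBli
  have hli1 := hli0.map' extL (LinearMap.ker_eq_bot.mpr hext_inj)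
  have hli2 := hli1.linearIndepOn_id
  have hrange : Set.range (⇑extL ∘
        (Subtype.val : {x : G.E → ZMod 2 // x ∈ (B : Set (G.E → ZMod 2))} → (G.E → ZMod 2)))
      = ⇑extL '' (B : Set (G.E → ZMod 2)) := by
    rw [Set.range_comp, Subtype.range_val]
  rw [hrange] at hli2
  have hli3 := hli2.id_insert hCnot
  have hset : ((B' : Finset (Option G.E → ZMod 2)) : Set (Option G.E → ZMod 2))
      = insert C (⇑extL '' (B : Set (G.E → ZMod 2))) := by
    simp only [B', Finset.coe_insert, Finset.coe_image]
  have hli' : LinearIndependent (ZMod 2)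
      (fun x : B' => (x : Option G.E → ZMod 2)) := by
    rw [← hset] at hli3
    exact hli3
  -- span
  have hspan : Submodule.span (ZMod 2) (B' : Set (Option G.E → ZMod 2))
      = (G.addEdge u v).cycleSpace := by
    apply le_antisymm
    · apply Submodule.span_le.mpr
      intro x hx
      exact hmemH x (Finset.mem_coe.mp hx)
    · intro x hx
      set c := x none with hc
      set y := x - c • C with hy
      have hynone : y none = 0 := by
        show x none - c * C none = 0
        show x none - c * 1 = 0
        rw [mul_one, hc, sub_self]
      have hCH : C ∈ (G.addEdge u v).cycleSpace := hmemH C (Finset.mem_insert_self _ _)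
      have hyH : y ∈ (G.addEdge u v).cycleSpace :=
        Submodule.sub_mem _ hx (Submodule.smul_mem _ c hCH)
      have hz : (fun e => y (some e)) ∈ G.cycleSpace := by
        rw [memG_iff]
        intro w
        have h0 := (memH_iff y).mp hyH w
        rw [hsum, hynone, mul_zero, zero_add] at h0
        exact h0
      have hz' : (fun e => y (some e)) ∈ Submodule.span (ZMod 2) (B : Set (G.E → ZMod 2)) := by
        rw [hBspan]; exact hz
      have hey : extL (fun e => y (some e)) = y := by
        funext o
        cases o with
        | none => exact hynone.symm
        | some e => rfl
      have hyspan : y ∈ Submodule.span (ZMod 2) (B' : Set (Option G.E → ZMod 2)) := by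
        have h1 : extL (fun e => y (some e)) ∈
            Submodule.map extL (Submodule.span (ZMod 2) (B : Set (G.E → ZMod 2))) :=
          Submodule.mem_map_of_mem hz'
        rw [← Submodule.span_image, hey] at h1
        refine Submodule.span_mono ?_ h1
        rintro a ⟨b, hb, rfl⟩
        exact Finset.mem_coe.mpr
          (Finset.mem_insert_of_mem (Finset.mem_image_of_mem _ (Finset.mem_coe.mp hb)))
      have hCspan : C ∈ Submodule.span (ZMod 2) (B' : Set (Option G.E → ZMod 2)) :=
        Submodule.subset_span (Finset.mem_coe.mpr (Finset.mem_insert_self _ _))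
      have hxy : x = y + c • C := by rw [hy, sub_add_cancel]
      rw [hxy]
      exact Submodule.add_mem _ hyspan (Submodule.smul_mem _ c hCspan)
  -- charges
  have hch : ∀ o : (G.addEdge u v).E, (G.addEdge u v).charge B' o ≤ G.basisNum + 1 := by
    intro o
    show (B'.filter fun x => x o ≠ 0).card ≤ G.basisNum + 1
    cases o with
    | none =>
        have hsub : (B'.filter fun x => x (none : Option G.E) ≠ 0) ⊆ {C} := by
          intro x hx
          rcases Finset.mem_filter.mp hx with ⟨hxB, hxo⟩
          rcases Finset.mem_insert.mp hxB with rfl | hxB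
          · exact Finset.mem_singleton_self _
          · obtain ⟨z, -, rfl⟩ := Finset.mem_image.mp hxB
            exact absurd rfl hxo
        calc (B'.filter fun x => x (none : Option G.E) ≠ 0).card
            ≤ ({C} : Finset (Option G.E → ZMod 2)).card := Finset.card_le_card hsub
          _ = 1 := Finset.card_singleton _
          _ ≤ G.basisNum + 1 := Nat.le_add_left 1 _
    | some e =>
        have hsub : (B'.filter fun x => x (some e) ≠ 0) ⊆
            insert C ((B.filter fun z => z e ≠ 0).image extL) := by
          intro x hx
          rcases Finset.mem_filter.mp hx with ⟨hxB, hxo⟩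
          rcases Finset.mem_insert.mp hxB with rfl | hxB
          · exact Finset.mem_insert_self _ _
          · obtain ⟨z, hzB, rfl⟩ := Finset.mem_image.mp hxB
            refine Finset.mem_insert_of_mem (Finset.mem_image_of_mem _ ?_)
            exact Finset.mem_filter.mpr ⟨hzB, hxo⟩
        calc (B'.filter fun x => x (some e) ≠ 0).card
            ≤ (insert C ((B.filter fun z => z e ≠ 0).image extL)).card :=
              Finset.card_le_card hsub
          _ ≤ ((B.filter fun z => z e ≠ 0).image extL).card + 1 := Finset.card_insert_le _ _
          _ ≤ (B.filter fun z => z e ≠ 0).card + 1 :=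
              Nat.add_le_add_right Finset.card_image_le 1
          _ ≤ G.basisNum + 1 := Nat.add_le_add_right (hBch e) 1
  have hKB : (G.addEdge u v).IsKBasis (G.basisNum + 1) B' := ⟨⟨hmemH, hli', hspan⟩, hch⟩
  exact Nat.sInf_le ⟨B', hKB⟩
end
end

section
/- If G' is obtained from a graph G by subdividing one edge, then b(G') = b(G). -/
open scoped Classical

noncomputable section

section Aux

namespace Multigraph

variable (G : Multigraph) (e : G.E)

/-- The linear map from `F_2^{E(G)}` to `F_2^{E(G.subdivide e)}` duplicating the value at `e`. -/
noncomputable def sdPhi : (G.E → ZMod 2) →ₗ[ZMod 2] ((G.subdivide e).E → ZMod 2) where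
  toFun x := Sum.elim (fun f => x f.1) (fun _ => x e)
  map_add' a b := by funext f; cases f <;> rfl
  map_smul' c a := by funext f; cases f <;> rfl

lemma sdPhi_injective : Function.Injective (G.sdPhi e) := by
  intro x y h
  funext g
  by_cases hg : g = e
  · subst hg; exact congrFun h (Sum.inr true)
  · exact congrFun h (Sum.inl ⟨g, hg⟩)

lemma sum_subdivE {M : Type} [AddCommMonoid M] (F : (G.subdivide e).E → M) :
    ∑ f : (G.subdivide e).E, F f
      = ∑ a : {f : G.E // f ≠ e}, F (Sum.inl a) + ∑ b : Bool, F (Sum.inr b) := by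
  rw [show (∑ f : (G.subdivide e).E, F f) = ∑ x : ({f : G.E // f ≠ e} ⊕ Bool), F x from
    Fintype.sum_equiv (Equiv.refl _) _ _ (fun _ => rfl)]
  exact Fintype.sum_sum_type F

lemma sdPhi_sum (x : G.E → ZMod 2) (v : G.V) :
    ∑ f : (G.subdivide e).E, (G.subdivide e).inc (some v) f * (G.sdPhi e x) f
      = ∑ f : G.E, G.inc v f * x f := by
  rw [sum_subdivE]
  have h1 : ∑ a : {f : G.E // f ≠ e},
      (G.subdivide e).inc (some v) (Sum.inl a) * (G.sdPhi e x) (Sum.inl a)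
      = ∑ f ∈ Finset.univ \ {e}, G.inc v f * x f := by
    rw [Finset.sum_subtype (p := fun f => f ≠ e) (Finset.univ \ {e}) (by simp)
      (fun f => G.inc v f * x f)]
    apply Finset.sum_congr rfl
    intro a _
    simp [Multigraph.inc, Multigraph.subdivide, Multigraph.sdPhi]
    exact Or.inl rfl
  have hb : ∀ b : Bool,
      (G.subdivide e).inc (some v) (Sum.inr b) * (G.sdPhi e x) (Sum.inr b)
      = (if (cond b (G.fst e) (G.snd e)) = v then 1 else 0) * x e := by
    intro b
    cases b <;> simp [Multigraph.inc, Multigraph.subdivide, Multigraph.sdPhi] <;> rfl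
  have h2 : ∑ b : Bool,
      (G.subdivide e).inc (some v) (Sum.inr b) * (G.sdPhi e x) (Sum.inr b)
      = G.inc v e * x e := by
    rw [Fintype.sum_bool, hb true, hb false]
    simp only [cond_true, cond_false, Multigraph.inc, add_mul]
  rw [h1, h2, ← Finset.sum_eq_sum_sdiff_singleton_add (Finset.mem_univ e)]

lemma sdPhi_sum_none (x' : (G.subdivide e).E → ZMod 2) :
    ∑ f : (G.subdivide e).E, (G.subdivide e).inc none f * x' f
      = x' (Sum.inr true) + x' (Sum.inr false) := by
  rw [sum_subdivE]
  have h1 : ∑ a : {f : G.E // f ≠ e},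
      (G.subdivide e).inc none (Sum.inl a) * x' (Sum.inl a) = 0 := by
    apply Finset.sum_eq_zero
    intro a _
    simp [Multigraph.inc, Multigraph.subdivide]
  have h2 : ∀ b : Bool, (G.subdivide e).inc none (Sum.inr b) = 1 := by
    intro b
    cases b <;> simp [Multigraph.inc, Multigraph.subdivide]
  rw [h1, Fintype.sum_bool, h2, h2, zero_add, one_mul, one_mul]

lemma sdPhi_mem (x : G.E → ZMod 2) :
    x ∈ G.cycleSpace ↔ G.sdPhi e x ∈ (G.subdivide e).cycleSpace := by
  constructor
  · intro hx v
    cases v with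
    | none =>
        rw [sdPhi_sum_none]
        show x e + x e = 0
        exact CharTwo.add_self_eq_zero _
    | some v => rw [sdPhi_sum]; exact hx v
  · intro h v
    have := h (some v)
    rwa [sdPhi_sum] at this

/-- Inverse (on the cycle space) of `sdPhi`. -/
noncomputable def sdPsi : ((G.subdivide e).E → ZMod 2) → (G.E → ZMod 2) :=
  fun x' g => if h : g = e then x' (Sum.inr true) else x' (Sum.inl ⟨g, h⟩)

lemma sdPhi_sdPsi (x' : (G.subdivide e).E → ZMod 2)
    (hx' : x' ∈ (G.subdivide e).cycleSpace) : G.sdPhi e (G.sdPsi e x') = x' := by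
  have h0 := hx' none
  rw [sdPhi_sum_none] at h0
  have hb : x' (Sum.inr false) = x' (Sum.inr true) := by
    have := eq_neg_of_add_eq_zero_right h0
    rwa [CharTwo.neg_eq] at this
  funext f
  cases f with
  | inl g =>
      show (if h : g.1 = e then x' (Sum.inr true) else x' (Sum.inl ⟨g.1, h⟩)) = x' (Sum.inl g)
      rw [dif_neg g.2]
  | inr b =>
      show (if h : (e : G.E) = e then x' (Sum.inr true) else _) = x' (Sum.inr b)
      rw [dif_pos rfl]
      cases b
      · exact hb.symm
      · rfl

lemma sdPhi_map :
    (G.cycleSpace).map (G.sdPhi e) = (G.subdivide e).cycleSpace := by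
  apply le_antisymm
  · rintro _ ⟨x, hx, rfl⟩
    exact (G.sdPhi_mem e x).1 hx
  · intro x' hx'
    exact ⟨G.sdPsi e x', (G.sdPhi_mem e _).2 (by rw [G.sdPhi_sdPsi e x' hx']; exact hx'),
      G.sdPhi_sdPsi e x' hx'⟩

end Multigraph

/-- Charge of an image under an injective-on-`B` map that is pointwise compatible at `f`/`g`. -/
lemma charge_image_eq {G H : Multigraph} (φ : (G.E → ZMod 2) → (H.E → ZMod 2))
    (B : Finset (G.E → ZMod 2)) (hφ : Set.InjOn φ ↑B) (f : H.E) (g : G.E)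
    (hfg : ∀ x ∈ B, (φ x) f = x g) :
    H.charge (B.image φ) f = G.charge B g := by
  have hset : ((B.image φ).filter fun y => y f ≠ 0) = (B.filter fun x => x g ≠ 0).image φ := by
    ext y
    simp only [Finset.mem_filter, Finset.mem_image]
    constructor
    · rintro ⟨⟨x, hx, rfl⟩, hne⟩
      exact ⟨x, ⟨hx, by rwa [hfg x hx] at hne⟩, rfl⟩
    · rintro ⟨x, ⟨hx, hne⟩, rfl⟩
      exact ⟨⟨x, hx, rfl⟩, by rwa [hfg x hx]⟩
  rw [Multigraph.charge, Multigraph.charge, hset,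
    Finset.card_image_of_injOn (hφ.mono (by exact_mod_cast Finset.filter_subset _ _))]

/-- Forward: a `k`-basis of `G` gives a `k`-basis of the subdivision. -/
lemma isKBasis_sdPhi (G : Multigraph) (e : G.E) (k : ℕ) (B : Finset (G.E → ZMod 2))
    (hB : G.IsKBasis k B) :
    (G.subdivide e).IsKBasis k (B.image (G.sdPhi e)) := by
  obtain ⟨⟨hmem, hli, hspan⟩, hch⟩ := hB
  refine ⟨⟨?_, ?_, ?_⟩, ?_⟩
  · intro x' hx'
    rw [Finset.mem_image] at hx'
    obtain ⟨x, hx, rfl⟩ := hx'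
    exact (G.sdPhi_mem e x).1 (hmem x hx)
  · have h1 : LinearIndependent (ZMod 2) (fun x : B => G.sdPhi e (x : G.E → ZMod 2)) :=
      hli.map' _ (LinearMap.ker_eq_bot.mpr (G.sdPhi_injective e))
    choose pre hpre hpre2 using fun y : (B.image (G.sdPhi e)) =>
      Finset.mem_image.mp y.2
    have hginj : Function.Injective
        (fun y : (B.image (G.sdPhi e)) => (⟨pre y, hpre y⟩ : B)) := by
      intro y z h
      apply Subtype.ext
      have hp : pre y = pre z := congrArg Subtype.val h
      rw [← hpre2 y, ← hpre2 z, hp]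
    have h2 := h1.comp _ hginj
    have hfun : (fun y : (B.image (G.sdPhi e)) => (y : (G.subdivide e).E → ZMod 2))
        = (fun x : B => G.sdPhi e (x : G.E → ZMod 2)) ∘
          (fun y : (B.image (G.sdPhi e)) => (⟨pre y, hpre y⟩ : B)) := by
      funext y
      exact (hpre2 y).symm
    rw [hfun]
    exact h2
  · rw [Finset.coe_image, Submodule.span_image, hspan, Multigraph.sdPhi_map]
  · intro f
    cases f with
    | inl g =>
        rw [charge_image_eq (G.sdPhi e) B ((G.sdPhi_injective e).injOn) (Sum.inl g) g.1
          (fun x _ => rfl)]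
        exact hch g.1
    | inr b =>
        rw [charge_image_eq (G.sdPhi e) B ((G.sdPhi_injective e).injOn) (Sum.inr b) e
          (fun x _ => rfl)]
        exact hch e

set_option maxHeartbeats 1600000 in
/-- Backward: a `k`-basis of the subdivision gives a `k`-basis of `G`. -/
lemma isKBasis_sdPsi (G : Multigraph) (e : G.E) (k : ℕ)
    (B' : Finset (((G.subdivide e).E → ZMod 2)))
    (hB' : (G.subdivide e).IsKBasis k B') :
    G.IsKBasis k (B'.image (G.sdPsi e)) := by
  obtain ⟨⟨hmem, hli, hspan⟩, hch⟩ := hB'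
  have hps : ∀ x' ∈ B', G.sdPhi e (G.sdPsi e x') = x' :=
    fun x' hx' => G.sdPhi_sdPsi e x' (hmem x' hx')
  have himg : (B'.image (G.sdPsi e)).image (G.sdPhi e) = B' := by
    rw [Finset.image_image]
    have h := Finset.image_congr (g := id) (s := B')
      (f := (G.sdPhi e : _ → _) ∘ G.sdPsi e) (fun x hx => hps x hx)
    rw [h, Finset.image_id]
  have hinjOn : Set.InjOn (G.sdPsi e) ↑B' := by
    intro a ha b hb h
    rw [← hps a ha, ← hps b hb, h]
  refine ⟨⟨?_, ?_, ?_⟩, ?_⟩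
  · intro x hx
    rw [Finset.mem_image] at hx
    obtain ⟨x', hx', rfl⟩ := hx
    apply (G.sdPhi_mem e _).2
    rw [hps x' hx']
    exact hmem x' hx'
  · apply LinearIndependent.of_comp (G.sdPhi e)
    have hg : ∀ x : (B'.image (G.sdPsi e)), G.sdPhi e (x : G.E → ZMod 2) ∈ B' := by
      intro x
      have hh := Finset.mem_image_of_mem (G.sdPhi e) x.2
      rwa [himg] at hh
    have hginj : Function.Injective
        (fun x : (B'.image (G.sdPsi e)) => (⟨G.sdPhi e x, hg x⟩ : B')) := by
      intro a b h
      exact Subtype.ext (G.sdPhi_injective e (congrArg Subtype.val h))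
    exact hli.comp _ hginj
  · apply Submodule.map_injective_of_injective (G.sdPhi_injective e)
    rw [← Submodule.span_image, ← Finset.coe_image, himg, hspan, Multigraph.sdPhi_map]
  · intro g
    by_cases hg : g = e
    · rw [show G.charge (B'.image (G.sdPsi e)) g
          = (G.subdivide e).charge B' (Sum.inr true) from
        charge_image_eq (G.sdPsi e) B' hinjOn g (Sum.inr true)
          (fun x' _ => dif_pos hg)]
      exact hch (Sum.inr true)
    · rw [show G.charge (B'.image (G.sdPsi e)) g
          = (G.subdivide e).charge B' (Sum.inl ⟨g, hg⟩) from
        charge_image_eq (G.sdPsi e) B' hinjOn g (Sum.inl ⟨g, hg⟩)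
          (fun x' _ => dif_neg hg)]
      exact hch (Sum.inl ⟨g, hg⟩)

end Aux

/-- If `G'` is obtained from a graph `G` by subdividing one edge, then
`b(G') = b(G)`. -/
theorem basisNum_subdivide (G : Multigraph) (e : G.E) :
    (G.subdivide e).basisNum = G.basisNum := by
  unfold Multigraph.basisNum
  congr 1
  ext k
  constructor
  · rintro ⟨B', hB'⟩
    exact ⟨_, isKBasis_sdPsi G e k B' hB'⟩
  · rintro ⟨B, hB⟩
    exact ⟨_, isKBasis_sdPhi G e k B hB⟩
end
end

section
/- If G' is obtained from a graph G by adding a parallel copy of an existing edge e, then b(G') ≤ max{b(G), 2}. -/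
open scoped Classical

noncomputable section

namespace Multigraph

variable (G : Multigraph) (e : G.E)

private lemma zmod2_add_self (a : ZMod 2) : a + a = 0 := by
  have h2 : (2 : ZMod 2) = 0 := rfl
  calc a + a = 2 * a := by ring
  _ = 0 := by rw [h2, zero_mul]

private lemma zmod2_ne_zero {a : ZMod 2} (h : a ≠ 0) : a = 1 := by
  revert h; revert a; decide

/-- Extension of an edge-vector of `G` to the graph with a doubled edge. -/
noncomputable def pExt : (G.E → ZMod 2) →ₗ[ZMod 2] ((G.addEdge (G.fst e) (G.snd e)).E → ZMod 2) where
  toFun x := fun o => Option.elim o 0 x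
  map_add' x y := by funext o; cases o <;> simp [Pi.add_def]
  map_smul' c x := by funext o; cases o <;> simp [Pi.smul_def]

/-- Projection back. -/
noncomputable def pProj : (((G.addEdge (G.fst e) (G.snd e)).E → ZMod 2)) →ₗ[ZMod 2] (G.E → ZMod 2) where
  toFun z := fun f => z (some f) + (if f = e then z none else 0)
  map_add' x y := by funext f; by_cases h : f = e <;> simp [h, Pi.add_def] <;> ring
  map_smul' c x := by funext f; by_cases h : f = e <;> simp [h, Pi.smul_def] <;> ring

/-- The 2-cycle consisting of `e` and its new parallel copy. -/
noncomputable def pC : (G.addEdge (G.fst e) (G.snd e)).E → ZMod 2 :=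
  fun o => Option.elim o 1 (fun f => if f = e then 1 else 0)

lemma pExt_none (x : G.E → ZMod 2) : pExt G e x none = 0 := rfl
lemma pExt_some (x : G.E → ZMod 2) (f : G.E) : pExt G e x (some f) = x f := rfl
lemma pC_none : pC G e none = 1 := rfl
lemma pC_some (f : G.E) : pC G e (some f) = if f = e then 1 else 0 := rfl

lemma pProj_apply (z : (G.addEdge (G.fst e) (G.snd e)).E → ZMod 2) (f : G.E) :
    pProj G e z f = z (some f) + (if f = e then z none else 0) := rfl

lemma pProj_pExt (x : G.E → ZMod 2) : pProj G e (pExt G e x) = x := by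
  funext f
  rw [pProj_apply, pExt_some, pExt_none]
  simp

lemma pProj_pC : pProj G e (pC G e) = 0 := by
  funext f
  rw [pProj_apply, pC_some, pC_none]
  by_cases h : f = e <;> simp [h]
  decide

lemma pExt_inj : Function.Injective (pExt G e) :=
  Function.LeftInverse.injective (g := pProj G e) (fun x => pProj_pExt G e x)

lemma inc_some (v : G.V) (f : G.E) :
    (G.addEdge (G.fst e) (G.snd e)).inc v (some f) = G.inc v f := rfl
lemma inc_none (v : G.V) :
    (G.addEdge (G.fst e) (G.snd e)).inc v none = G.inc v e := rfl

lemma sum_option_inc (z : (G.addEdge (G.fst e) (G.snd e)).E → ZMod 2) (v : G.V) :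
    ∑ o : (G.addEdge (G.fst e) (G.snd e)).E, (G.addEdge (G.fst e) (G.snd e)).inc v o * z o
      = G.inc v e * z none + ∑ f : G.E, G.inc v f * z (some f) :=
  Fintype.sum_option _

end Multigraph
namespace Multigraph

variable (G : Multigraph) (e : G.E)

lemma mem_cycleSpace_iff (x : G.E → ZMod 2) :
    x ∈ G.cycleSpace ↔ ∀ v : G.V, ∑ f : G.E, G.inc v f * x f = 0 := Iff.rfl

lemma pExt_mem {x : G.E → ZMod 2} (hx : x ∈ G.cycleSpace) :
    pExt G e x ∈ (G.addEdge (G.fst e) (G.snd e)).cycleSpace := by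
  intro v
  rw [sum_option_inc G e _ v, pExt_none, mul_zero, zero_add]
  have := hx v
  simpa [pExt_some] using this

lemma pC_mem : pC G e ∈ (G.addEdge (G.fst e) (G.snd e)).cycleSpace := by
  intro v
  rw [sum_option_inc G e _ v, pC_none, mul_one]
  have h1 : ∑ f : G.E, G.inc v f * pC G e (some f) = G.inc v e := by
    simp only [pC_some, mul_ite, mul_one, mul_zero]
    simp
  rw [h1]
  exact zmod2_add_self _

lemma pProj_mem {z : (G.addEdge (G.fst e) (G.snd e)).E → ZMod 2}
    (hz : z ∈ (G.addEdge (G.fst e) (G.snd e)).cycleSpace) :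
    pProj G e z ∈ G.cycleSpace := by
  intro v
  have hz' := hz v
  rw [sum_option_inc] at hz'
  have h1 : ∑ f : G.E, G.inc v f * pProj G e z f
      = (∑ f : G.E, G.inc v f * z (some f)) + G.inc v e * z none := by
    simp only [pProj_apply, mul_add]
    rw [Finset.sum_add_distrib]
    congr 1
    simp only [mul_ite, mul_zero]
    simp
  rw [h1, add_comm, hz']

lemma pDecomp {z : (G.addEdge (G.fst e) (G.snd e)).E → ZMod 2} :
    z = pExt G e (pProj G e z) + z none • pC G e := by
  funext o
  cases o with
  | none =>
    show z none = pExt G e (pProj G e z) none + z none * pC G e none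
    rw [pExt_none, pC_none, mul_one, zero_add]
  | some f =>
    show z (some f) = pExt G e (pProj G e z) (some f) + z none * pC G e (some f)
    rw [pExt_some, pProj_apply, pC_some]
    by_cases h : f = e
    · simp [h, add_assoc, zmod2_add_self]
    · simp [h]

end Multigraph
namespace Multigraph

variable (G : Multigraph)

lemma exists_kBasis : ∃ k B, G.IsKBasis k B := by
  classical
  obtain ⟨b, hb_sub, hb_span, hb_li⟩ :=
    exists_linearIndependent (ZMod 2) ((G.cycleSpace : Set (G.E → ZMod 2)))
  have hfin : b.Finite := Set.toFinite b
  refine ⟨hfin.toFinset.card, hfin.toFinset, ⟨?_, ?_, ?_⟩, ?_⟩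
  · intro x hx
    exact hb_sub (hfin.mem_toFinset.mp hx)
  · have hsub : (hfin.toFinset : Set (G.E → ZMod 2)) ⊆ b := hfin.coe_toFinset.le
    exact LinearIndepOn.mono (v := id) hb_li hsub
  · rw [hfin.coe_toFinset, hb_span, Submodule.span_eq]
  · intro f
    exact Finset.card_filter_le _ _

lemma exists_basisNum_basis : ∃ B, G.IsKBasis G.basisNum B := by
  have hne : {k | ∃ B, G.IsKBasis k B}.Nonempty := by
    obtain ⟨k, B, h⟩ := G.exists_kBasis
    exact ⟨k, B, h⟩
  exact Nat.sInf_mem hne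

lemma basisNum_le {k : ℕ} {B : Finset (G.E → ZMod 2)} (h : G.IsKBasis k B) :
    G.basisNum ≤ k :=
  Nat.sInf_le ⟨B, h⟩

end Multigraph
namespace Multigraph

variable (G : Multigraph) (e : G.E)

lemma pC_not_mem_span (s : Set (G.E → ZMod 2)) :
    pC G e ∉ Submodule.span (ZMod 2) (pExt G e '' s) := by
  intro h
  have hle : Submodule.span (ZMod 2) (pExt G e '' s) ≤
      LinearMap.ker (LinearMap.proj (R := ZMod 2)
        (φ := fun _ : (G.addEdge (G.fst e) (G.snd e)).E => ZMod 2) none) := by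
    rw [Submodule.span_le]
    rintro _ ⟨x, -, rfl⟩
    exact LinearMap.mem_ker.mpr (pExt_none G e x)
  have h0 := LinearMap.mem_ker.mp (hle h)
  have h1 : pC G e none = 0 := h0
  rw [pC_none] at h1
  exact one_ne_zero h1

lemma li_image {s : Set (G.E → ZMod 2)}
    (hs : LinearIndependent (ZMod 2) (fun x : s => (x : G.E → ZMod 2))) :
    LinearIndependent (ZMod 2) (fun x : (pExt G e '' s) => (x : (G.addEdge (G.fst e) (G.snd e)).E → ZMod 2)) := by
  refine LinearIndepOn.image (f := pExt G e) hs ?_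
  rw [LinearMap.ker_eq_bot.mpr (pExt_inj G e)]
  exact disjoint_bot_right

lemma span_eq_cs {B : Finset (G.E → ZMod 2)}
    (hBspan : Submodule.span (ZMod 2) (B : Set (G.E → ZMod 2)) = G.cycleSpace)
    {S : Set ((G.addEdge (G.fst e) (G.snd e)).E → ZMod 2)}
    (hS1 : S ⊆ (G.addEdge (G.fst e) (G.snd e)).cycleSpace)
    (hS2 : pC G e ∈ Submodule.span (ZMod 2) S)
    (hS3 : ∀ x ∈ B, pExt G e x ∈ Submodule.span (ZMod 2) S) :
    Submodule.span (ZMod 2) S = (G.addEdge (G.fst e) (G.snd e)).cycleSpace := by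
  apply le_antisymm
  · rw [Submodule.span_le]; exact hS1
  · intro z hz
    have hw : pProj G e z ∈ Submodule.span (ZMod 2) (B : Set (G.E → ZMod 2)) := by
      rw [hBspan]; exact pProj_mem G e hz
    have hext : pExt G e (pProj G e z) ∈ Submodule.span (ZMod 2) S := by
      have hmem : pExt G e (pProj G e z) ∈
          Submodule.map (pExt G e) (Submodule.span (ZMod 2) (B : Set (G.E → ZMod 2))) :=
        ⟨_, hw, rfl⟩
      rw [← Submodule.span_image] at hmem
      refine Submodule.span_le.mpr ?_ hmem
      rintro _ ⟨x, hx, rfl⟩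
      exact hS3 x hx
    have hsum : pExt G e (pProj G e z) + z none • pC G e ∈ Submodule.span (ZMod 2) S :=
      add_mem hext (Submodule.smul_mem _ _ hS2)
    rwa [← pDecomp G e] at hsum

lemma charge_image (B : Finset (G.E → ZMod 2)) (o : (G.addEdge (G.fst e) (G.snd e)).E) :
    (G.addEdge (G.fst e) (G.snd e)).charge (B.image (pExt G e)) o
      = (B.filter fun x => pExt G e x o ≠ 0).card := by
  show ((B.image (pExt G e)).filter fun z => z o ≠ 0).card = _
  rw [Finset.filter_image]
  exact Finset.card_image_of_injective _ (pExt_inj G e)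

end Multigraph
namespace Multigraph

variable (G : Multigraph) (e : G.E)

lemma pC_ne_pExt (x : G.E → ZMod 2) : pC G e ≠ pExt G e x := by
  intro h
  have h1 := congrFun h none
  rw [pC_none, pExt_none] at h1
  exact one_ne_zero h1

lemma parallel_case0 {k : ℕ} {B : Finset (G.E → ZMod 2)} (hB : G.IsKBasis k B)
    (hm : G.charge B e = 0) :
    (G.addEdge (G.fst e) (G.snd e)).IsKBasis (max k 2)
      (insert (pC G e) (B.image (pExt G e))) := by
  obtain ⟨⟨hmem, hli, hspan⟩, hch⟩ := hB
  have hpc_not : pC G e ∉ B.image (pExt G e) := by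
    intro h
    obtain ⟨x, -, hx⟩ := Finset.mem_image.mp h
    exact pC_ne_pExt G e x hx.symm
  refine ⟨⟨?_, ?_, ?_⟩, ?_⟩
  · -- membership
    intro x hx
    rcases Finset.mem_insert.mp hx with h | h
    · exact h ▸ pC_mem G e
    · obtain ⟨y, hy, rfl⟩ := Finset.mem_image.mp h
      exact pExt_mem G e (hmem y hy)
  · -- linear independence
    have hTli : LinearIndependent (ZMod 2)
        (fun x : (insert (pC G e) (pExt G e '' (B : Set (G.E → ZMod 2))) :
          Set ((G.addEdge (G.fst e) (G.snd e)).E → ZMod 2)) =>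
            (x : (G.addEdge (G.fst e) (G.snd e)).E → ZMod 2)) := by
      refine (linearIndepOn_id_insert (fun h => pC_not_mem_span G e _ (Submodule.subset_span h))).mpr ?_
      exact ⟨li_image G e hli, pC_not_mem_span G e _⟩
    have hset : ((insert (pC G e) (B.image (pExt G e)) : Finset _) :
        Set ((G.addEdge (G.fst e) (G.snd e)).E → ZMod 2))
        ⊆ insert (pC G e) (pExt G e '' (B : Set (G.E → ZMod 2))) := by
      rw [Finset.coe_insert, Finset.coe_image]
    exact LinearIndepOn.mono (v := id) hTli hset
  · -- span
    rw [Finset.coe_insert, Finset.coe_image]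
    apply span_eq_cs G e hspan
    · rintro x hx
      rcases Set.mem_insert_iff.mp hx with rfl | ⟨y, hy, rfl⟩
      · exact pC_mem G e
      · exact pExt_mem G e (hmem y hy)
    · exact Submodule.subset_span (Set.mem_insert _ _)
    · intro x hx
      exact Submodule.subset_span (Set.mem_insert_of_mem _ ⟨x, hx, rfl⟩)
  · -- charges
    intro o
    have hcard : (G.addEdge (G.fst e) (G.snd e)).charge (insert (pC G e) (B.image (pExt G e))) o
        = (B.filter fun x => pExt G e x o ≠ 0).card + (if pC G e o ≠ 0 then 1 else 0) := by
      show ((insert (pC G e) (B.image (pExt G e))).filter fun z => z o ≠ 0).card = _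
      rw [Finset.filter_insert]
      by_cases h : pC G e o ≠ 0
      · rw [if_pos h, if_pos h,
          Finset.card_insert_of_notMem (fun hmem' => hpc_not (Finset.mem_of_mem_filter _ hmem')),
          Finset.filter_image, Finset.card_image_of_injective _ (pExt_inj G e)]
      · rw [if_neg h, if_neg h, add_zero,
          Finset.filter_image, Finset.card_image_of_injective _ (pExt_inj G e)]
    rw [hcard]
    cases o with
    | none =>
      have h1 : (B.filter fun x => pExt G e x none ≠ 0) = ∅ := by
        apply Finset.filter_eq_empty_iff.mpr
        intro x _ hx
        exact hx (pExt_none G e x)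
      rw [h1]
      simp [pC_none]
    | some f =>
      have h1 : (B.filter fun x => pExt G e x (some f) ≠ 0) = (B.filter fun x => x f ≠ 0) := by
        apply Finset.filter_congr
        intro x _
        rw [pExt_some]
      rw [h1]
      by_cases hf : f = e
      · subst hf
        have h2 : (B.filter fun x => x f ≠ 0).card = 0 := hm
        rw [h2]
        simp only [pC_some, if_pos rfl]
        simp
      · have h2 : pC G e (some f) = 0 := by rw [pC_some, if_neg hf]
        rw [h2]
        simp only [ne_eq, not_true_eq_false, not_not]
        have : (B.filter fun x => x f ≠ 0).card ≤ k := hch f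
        calc (B.filter fun x => x f ≠ 0).card + (if (0:ZMod 2) ≠ 0 then 1 else 0)
            = (B.filter fun x => x f ≠ 0).card := by simp
          _ ≤ k := this
          _ ≤ max k 2 := le_max_left _ _

end Multigraph
namespace Multigraph

private lemma card_filter_insert' {α : Type} [DecidableEq α] (p : α → Prop) [DecidablePred p]
    (a : α) (s : Finset α) (ha : a ∉ s) :
    ((insert a s).filter p).card = (if p a then 1 else 0) + (s.filter p).card := by
  rw [Finset.filter_insert]
  by_cases h : p a
  · rw [if_pos h, if_pos h,
      Finset.card_insert_of_notMem (fun hc => ha (Finset.mem_of_mem_filter _ hc)), add_comm]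
  · rw [if_neg h, if_neg h, zero_add]

variable (G : Multigraph) (e : G.E)

lemma pProj_a1 (x0 : G.E → ZMod 2) : pProj G e (pExt G e x0 + pC G e) = x0 := by
  rw [map_add, pProj_pExt, pProj_pC, add_zero]

lemma parallel_case1 {k : ℕ} {B : Finset (G.E → ZMod 2)} (hB : G.IsKBasis k B)
    {x0 : G.E → ZMod 2} (hx0B : x0 ∈ B) (hx0e : x0 e ≠ 0) :
    (G.addEdge (G.fst e) (G.snd e)).IsKBasis (max k 2)
      (insert (pExt G e x0 + pC G e)
        (insert (pC G e) ((B.erase x0).image (pExt G e)))) := by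
  obtain ⟨⟨hmem, hli, hspan⟩, hch⟩ := hB
  set a1 : (G.addEdge (G.fst e) (G.snd e)).E → ZMod 2 := pExt G e x0 + pC G e with ha1def
  set S : Finset ((G.addEdge (G.fst e) (G.snd e)).E → ZMod 2) :=
    (B.erase x0).image (pExt G e) with hSdef
  have hx0ne : x0 ≠ 0 := LinearIndependent.ne_zero (⟨x0, hx0B⟩ : {x // x ∈ B}) hli
  have hpcS : pC G e ∉ S := by
    intro h
    obtain ⟨x, -, hx⟩ := Finset.mem_image.mp h
    exact pC_ne_pExt G e x hx.symm
  have ha1pc : a1 ≠ pC G e := by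
    intro h
    have := congrArg (pProj G e) h
    rw [pProj_a1, pProj_pC] at this
    exact hx0ne this
  have ha1S : a1 ∉ S := by
    intro h
    obtain ⟨x, hxmem, hx⟩ := Finset.mem_image.mp h
    have := congrArg (pProj G e) hx
    rw [pProj_pExt, pProj_a1] at this
    exact (Finset.mem_erase.mp hxmem).1 this
  have ha1ins : a1 ∉ insert (pC G e) S :=
    fun h => (Finset.mem_insert.mp h).elim ha1pc ha1S
  -- set versions
  have hcoeS : (S : Set ((G.addEdge (G.fst e) (G.snd e)).E → ZMod 2))
      = pExt G e '' ((B.erase x0) : Set (G.E → ZMod 2)) := Finset.coe_image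
  -- independence of the erased part
  have hliE : LinearIndependent (ZMod 2)
      (fun x : ((B.erase x0 : Finset (G.E → ZMod 2)) : Set (G.E → ZMod 2)) =>
        (x : G.E → ZMod 2)) :=
    LinearIndepOn.mono (v := id) hli (Finset.coe_subset.mpr (Finset.erase_subset _ _))
  have hliS : LinearIndependent (ZMod 2)
      (fun x : (pExt G e '' ((B.erase x0 : Finset (G.E → ZMod 2)) : Set (G.E → ZMod 2))) =>
        (x : (G.addEdge (G.fst e) (G.snd e)).E → ZMod 2)) :=
    li_image G e hliE
  -- x0 not in span of the rest
  have hx0span : x0 ∉ Submodule.span (ZMod 2)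
      (((B.erase x0 : Finset (G.E → ZMod 2)) : Set (G.E → ZMod 2))) := by
    rw [Finset.coe_erase]
    have hx0notin : x0 ∉ (B : Set (G.E → ZMod 2)) \ {x0} := fun h => h.2 rfl
    have hliB' : LinearIndependent (ZMod 2)
        (fun x : (insert x0 ((B : Set (G.E → ZMod 2)) \ {x0}) : Set (G.E → ZMod 2)) =>
          (x : G.E → ZMod 2)) := by
      refine LinearIndepOn.mono (v := id) hli ?_
      rw [Set.insert_diff_singleton]
      exact Set.insert_subset (Finset.mem_coe.mpr hx0B) (fun y hy => hy)
    exact ((linearIndepOn_id_insert hx0notin).mp hliB').2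
  -- a1 not in span of insert pC S
  have ha1span : a1 ∉ Submodule.span (ZMod 2)
      (insert (pC G e) (S : Set ((G.addEdge (G.fst e) (G.snd e)).E → ZMod 2))) := by
    intro hmem'
    have h1 : x0 ∈ Submodule.map (pProj G e) (Submodule.span (ZMod 2)
        (insert (pC G e) (S : Set ((G.addEdge (G.fst e) (G.snd e)).E → ZMod 2)))) :=
      ⟨a1, hmem', pProj_a1 G e x0⟩
    rw [← Submodule.span_image] at h1
    have h3 : pProj G e '' (insert (pC G e) (S : Set _)) ⊆
        insert 0 (((B.erase x0 : Finset (G.E → ZMod 2)) : Set (G.E → ZMod 2))) := by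
      rintro _ ⟨y, hy, rfl⟩
      rcases Set.mem_insert_iff.mp hy with rfl | hyS
      · rw [pProj_pC]; exact Set.mem_insert _ _
      · rw [hcoeS] at hyS
        obtain ⟨z, hz, rfl⟩ := hyS
        rw [pProj_pExt]
        exact Set.mem_insert_of_mem _ hz
    have h4 := Submodule.span_mono h3 h1
    rw [Submodule.span_insert_zero] at h4
    exact hx0span h4
  refine ⟨⟨?_, ?_, ?_⟩, ?_⟩
  · -- membership
    intro x hx
    rcases Finset.mem_insert.mp hx with rfl | hx
    · exact add_mem (pExt_mem G e (hmem x0 hx0B)) (pC_mem G e)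
    rcases Finset.mem_insert.mp hx with rfl | hx
    · exact pC_mem G e
    · obtain ⟨y, hy, rfl⟩ := Finset.mem_image.mp hx
      exact pExt_mem G e (hmem y (Finset.mem_of_mem_erase hy))
  · -- linear independence
    have hli1 : LinearIndependent (ZMod 2)
        (fun x : (insert (pC G e) (S : Set ((G.addEdge (G.fst e) (G.snd e)).E → ZMod 2)) :
            Set ((G.addEdge (G.fst e) (G.snd e)).E → ZMod 2)) =>
          (x : (G.addEdge (G.fst e) (G.snd e)).E → ZMod 2)) := by
      refine (linearIndepOn_id_insert (fun h => (hpcS (Finset.mem_coe.mp h)))).mpr ?_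
      refine ⟨?_, ?_⟩
      · rw [hcoeS]; exact hliS
      · rw [hcoeS]; exact pC_not_mem_span G e _
    have hTli : LinearIndependent (ZMod 2)
        (fun x : (insert a1 (insert (pC G e)
            (S : Set ((G.addEdge (G.fst e) (G.snd e)).E → ZMod 2))) :
            Set ((G.addEdge (G.fst e) (G.snd e)).E → ZMod 2)) =>
          (x : (G.addEdge (G.fst e) (G.snd e)).E → ZMod 2)) := by
      refine (linearIndepOn_id_insert (fun h => ha1ins (by
        rcases Set.mem_insert_iff.mp h with h' | h'
        · exact Finset.mem_insert.mpr (Or.inl h')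
        · exact Finset.mem_insert.mpr (Or.inr (Finset.mem_coe.mp h'))))).mpr ?_
      exact ⟨hli1, ha1span⟩
    refine LinearIndepOn.mono (v := id) hTli ?_
    intro x hx
    have hx' : x ∈ insert a1 (insert (pC G e) S) := hx
    rcases Finset.mem_insert.mp hx' with rfl | hx'
    · exact Set.mem_insert _ _
    rcases Finset.mem_insert.mp hx' with rfl | hx'
    · exact Set.mem_insert_of_mem _ (Set.mem_insert _ _)
    · exact Set.mem_insert_of_mem _ (Set.mem_insert_of_mem _ (Finset.mem_coe.mpr hx'))
  · -- span
    rw [Finset.coe_insert, Finset.coe_insert]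
    apply span_eq_cs G e hspan
    · rintro x hx
      rcases Set.mem_insert_iff.mp hx with rfl | hx
      · exact add_mem (pExt_mem G e (hmem x0 hx0B)) (pC_mem G e)
      rcases Set.mem_insert_iff.mp hx with rfl | hx
      · exact pC_mem G e
      · rw [hcoeS] at hx
        obtain ⟨y, hy, rfl⟩ := hx
        exact pExt_mem G e (hmem y (Finset.mem_of_mem_erase (Finset.mem_coe.mp hy)))
    · exact Submodule.subset_span (Set.mem_insert_of_mem _ (Set.mem_insert _ _))
    · intro x hx
      by_cases hxx0 : x = x0
      · subst hxx0
        have hpc2 : pC G e + pC G e = 0 := funext fun o => zmod2_add_self _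
        have hx0eq : pExt G e x = a1 + pC G e := by
          rw [ha1def, add_assoc, hpc2, add_zero]
        rw [hx0eq]
        exact add_mem (Submodule.subset_span (Set.mem_insert _ _))
          (Submodule.subset_span (Set.mem_insert_of_mem _ (Set.mem_insert _ _)))
      · apply Submodule.subset_span
        apply Set.mem_insert_of_mem
        apply Set.mem_insert_of_mem
        rw [hcoeS]
        exact ⟨x, Finset.mem_coe.mpr (Finset.mem_erase.mpr ⟨hxx0, hx⟩), rfl⟩
  · -- charges
    intro o
    have hcard : (G.addEdge (G.fst e) (G.snd e)).charge
        (insert a1 (insert (pC G e) S)) o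
        = (if a1 o ≠ 0 then 1 else 0) + ((if pC G e o ≠ 0 then 1 else 0)
            + ((B.erase x0).filter fun x => pExt G e x o ≠ 0).card) := by
      show ((insert a1 (insert (pC G e) S)).filter fun z => z o ≠ 0).card = _
      rw [card_filter_insert' _ _ _ ha1ins, card_filter_insert' _ _ _ hpcS,
        Finset.filter_image, Finset.card_image_of_injective _ (pExt_inj G e)]
    rw [hcard]
    cases o with
    | none =>
      have hfe : ((B.erase x0).filter fun x => pExt G e x none ≠ 0) = ∅ :=
        Finset.filter_eq_empty_iff.mpr fun x _ hx => hx (pExt_none G e x)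
      have ha1n : a1 none = 1 := by
        show pExt G e x0 none + pC G e none = 1
        rw [pExt_none, pC_none, zero_add]
      rw [hfe, ha1n, pC_none]
      simp
    | some f =>
      have hfilt : ((B.erase x0).filter fun x => pExt G e x (some f) ≠ 0)
          = (B.filter fun x => x f ≠ 0).erase x0 := by
        rw [← Finset.filter_erase]
        exact Finset.filter_congr fun x _ => by rw [pExt_some]
      rw [hfilt]
      have hle : (B.filter fun x => x f ≠ 0).card ≤ k := hch f
      have ha1f : a1 (some f) = x0 f + (if f = e then 1 else 0) := by
        show pExt G e x0 (some f) + pC G e (some f) = _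
        rw [pExt_some, pC_some]
      by_cases hf : f = e
      · have hx0f : x0 f ≠ 0 := by rw [hf]; exact hx0e
        have hx01 : x0 f = 1 := zmod2_ne_zero hx0f
        have ha1z : (if a1 (some f) ≠ 0 then (1:ℕ) else 0) = 0 := by
          rw [ha1f, if_pos hf, hx01, if_neg (by decide : ¬((1:ZMod 2) + 1 ≠ 0))]
        have hpcf : (if pC G e (some f) ≠ 0 then (1:ℕ) else 0) = 1 := by
          rw [pC_some, if_pos hf, if_pos (by decide : (1:ZMod 2) ≠ 0)]
        have hx0filt : x0 ∈ B.filter fun x => x f ≠ 0 :=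
          Finset.mem_filter.mpr ⟨hx0B, hx0f⟩
        have hcard1 : 0 < (B.filter fun x => x f ≠ 0).card :=
          Finset.card_pos.mpr ⟨x0, hx0filt⟩
        rw [ha1z, hpcf, Finset.card_erase_of_mem hx0filt]
        obtain ⟨c, hc⟩ : ∃ c, (B.filter fun x => x f ≠ 0).card = c := ⟨_, rfl⟩
        rw [hc] at hle hcard1 ⊢
        calc 0 + (1 + (c - 1)) = c := by rw [zero_add]; exact Nat.add_sub_cancel' hcard1
          _ ≤ k := hle
          _ ≤ max k 2 := le_max_left _ _
      · have ha1f' : (if a1 (some f) ≠ 0 then (1:ℕ) else 0)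
            = if x0 f ≠ 0 then 1 else 0 := by
          rw [ha1f, if_neg hf, add_zero]
        have hpcf : (if pC G e (some f) ≠ 0 then (1:ℕ) else 0) = 0 := by
          rw [pC_some, if_neg hf, if_neg (by decide : ¬((0:ZMod 2) ≠ 0))]
        rw [ha1f', hpcf, zero_add]
        by_cases hx0f : x0 f ≠ 0
        · have hx0filt : x0 ∈ B.filter fun x => x f ≠ 0 :=
            Finset.mem_filter.mpr ⟨hx0B, hx0f⟩
          have hcard1 : 0 < (B.filter fun x => x f ≠ 0).card :=
            Finset.card_pos.mpr ⟨x0, hx0filt⟩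
          rw [if_pos hx0f, Finset.card_erase_of_mem hx0filt]
          obtain ⟨c, hc⟩ : ∃ c, (B.filter fun x => x f ≠ 0).card = c := ⟨_, rfl⟩
          rw [hc] at hle hcard1 ⊢
          calc 1 + (c - 1) = c := Nat.add_sub_cancel' hcard1
            _ ≤ k := hle
            _ ≤ max k 2 := le_max_left _ _
        · rw [if_neg hx0f, zero_add]
          calc ((B.filter fun x => x f ≠ 0).erase x0).card
              ≤ (B.filter fun x => x f ≠ 0).card := Finset.card_erase_le
            _ ≤ k := hle
            _ ≤ max k 2 := le_max_left _ _

end Multigraph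
/-- If `G'` is obtained from a graph `G` by adding a parallel copy of an
existing edge `e`, then `b(G') ≤ max {b(G), 2}`. -/
theorem basisNum_parallel_le (G : Multigraph) (e : G.E) :
    (G.addEdge (G.fst e) (G.snd e)).basisNum ≤ max G.basisNum 2 := by
  obtain ⟨B, hB⟩ := G.exists_basisNum_basis
  by_cases hm : G.charge B e = 0
  · exact Multigraph.basisNum_le _ (Multigraph.parallel_case0 G e hB hm)
  · have hne : (B.filter fun x => x e ≠ 0).Nonempty :=
      Finset.card_pos.mp (Nat.pos_of_ne_zero hm)
    obtain ⟨x0, hx0⟩ := hne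
    obtain ⟨hx0B, hx0e⟩ := Finset.mem_filter.mp hx0
    exact Multigraph.basisNum_le _ (Multigraph.parallel_case1 G e hB hx0B hx0e)
end
end

section
/- Let K_4 be drawn in the plane with exactly one crossing x, and let C be the 4-cycle surrounding x (the four uncrossed edges). For any assignment of the multiset {1,1,2,2} to the four edges of C, there exists a basis of the cycle space of K_4 (consisting of three cycles) such that each edge of C has charge at most its assigned number and the two crossing edges have charge at most 3. -/
open scoped Classical

noncomputable section

/-- The complete graph `K₄` with vertices `u₀, u₁, u₂, u₃`. -/
noncomputable abbrev K4 : Multigraph where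
  V := Fin 4
  E := {p : Fin 4 × Fin 4 // p.1 < p.2}
  fintV := inferInstance
  fintE := inferInstance
  fst := fun p => p.1.1
  snd := fun p => p.1.2

/-- The edges of the 4-cycle `u₀-u₁-u₂-u₃-u₀` surrounding the crossing when `K₄` is drawn with
the chords `u₀u₂` and `u₁u₃` crossing. -/
noncomputable def cycleEdge : Fin 4 → K4.E :=
  ![⟨(0, 1), by decide⟩, ⟨(1, 2), by decide⟩, ⟨(2, 3), by decide⟩, ⟨(0, 3), by decide⟩]

namespace K4Proof

def e01 : K4.E := ⟨(0,1), by decide⟩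
def e02 : K4.E := ⟨(0,2), by decide⟩
def e03 : K4.E := ⟨(0,3), by decide⟩
def e12 : K4.E := ⟨(1,2), by decide⟩
def e13 : K4.E := ⟨(1,3), by decide⟩
def e23 : K4.E := ⟨(2,3), by decide⟩

/-- Triangle u0u1u2. -/
abbrev t012 : K4.E → ZMod 2 := fun e => if e = e01 ∨ e = e12 ∨ e = e02 then 1 else 0
/-- Triangle u0u1u3. -/
abbrev t013 : K4.E → ZMod 2 := fun e => if e = e01 ∨ e = e13 ∨ e = e03 then 1 else 0
/-- Triangle u0u2u3. -/
abbrev t023 : K4.E → ZMod 2 := fun e => if e = e02 ∨ e = e23 ∨ e = e03 then 1 else 0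
/-- Triangle u1u2u3. -/
abbrev t123 : K4.E → ZMod 2 := fun e => if e = e12 ∨ e = e23 ∨ e = e13 then 1 else 0
/-- 4-cycle avoiding e01, e23. -/
abbrev q1 : K4.E → ZMod 2 := fun e => if e = e12 ∨ e = e03 ∨ e = e02 ∨ e = e13 then 1 else 0
/-- 4-cycle avoiding e12, e03. -/
abbrev q2 : K4.E → ZMod 2 := fun e => if e = e01 ∨ e = e23 ∨ e = e02 ∨ e = e13 then 1 else 0

/-- Computable version of `K4.inc`. -/
abbrev inc' (v : Fin 4) (e : K4.E) : ZMod 2 :=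
  (if K4.fst e = v then 1 else 0) + (if K4.snd e = v then 1 else 0)

lemma inc_eq (v : K4.V) (e : K4.E) : K4.inc v e = inc' v e := by
  unfold Multigraph.inc inc'
  congr

/-- Decidable version of membership in the cycle space. -/
abbrev inCS (x : K4.E → ZMod 2) : Prop := ∀ v : Fin 4, ∑ e : K4.E, inc' v e * x e = 0

lemma mem_cs (x : K4.E → ZMod 2) : x ∈ K4.cycleSpace ↔ inCS x := by
  show (∀ v : K4.V, ∑ e : K4.E, K4.inc v e * x e = 0) ↔ _
  simp only [inc_eq]

lemma master_decomp : ∀ x : K4.E → ZMod 2, inCS x →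
    x = x e12 • t012 + x e13 • t013 + x e23 • t023 := by decide

lemma master_indep : LinearIndependent (ZMod 2) ![t012, t013, t023] := by
  rw [Fintype.linearIndependent_iff]; decide

lemma master_span :
    Submodule.span (ZMod 2) (Set.range ![t012, t013, t023]) = K4.cycleSpace := by
  apply le_antisymm
  · rw [Submodule.span_le]
    rintro x ⟨i, rfl⟩
    fin_cases i
    · exact (mem_cs _).2 (by decide)
    · exact (mem_cs _).2 (by decide)
    · exact (mem_cs _).2 (by decide)
  · intro x hx
    rw [master_decomp x ((mem_cs x).1 hx)]
    refine add_mem (add_mem (Submodule.smul_mem _ _ ?_) (Submodule.smul_mem _ _ ?_))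
      (Submodule.smul_mem _ _ ?_)
    · exact Submodule.subset_span ⟨0, rfl⟩
    · exact Submodule.subset_span ⟨1, rfl⟩
    · exact Submodule.subset_span ⟨2, rfl⟩

lemma finrank_cs : Module.finrank (ZMod 2) K4.cycleSpace = 3 := by
  have h := finrank_span_eq_card master_indep
  rw [master_span] at h
  simpa using h

lemma build (a b c : K4.E → ZMod 2) (ha : inCS a) (hb : inCS b) (hc : inCS c)
    (hab : a ≠ b) (hac : a ≠ c) (hbc : b ≠ c)
    (hdec : ∀ x : K4.E → ZMod 2, inCS x →
      x = 0 ∨ x = a ∨ x = b ∨ x = c ∨ x = a + b ∨ x = a + c ∨ x = b + c ∨ x = a + b + c) :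
    K4.IsCycleBasis {a, b, c} ∧ ({a, b, c} : Finset (K4.E → ZMod 2)).card = 3 := by
  have hmem : ∀ x ∈ ({a, b, c} : Finset (K4.E → ZMod 2)), x ∈ K4.cycleSpace := by
    intro x hx
    simp only [Finset.mem_insert, Finset.mem_singleton] at hx
    rcases hx with rfl | rfl | rfl
    exacts [(mem_cs _).2 ha, (mem_cs _).2 hb, (mem_cs _).2 hc]
  have hA : a ∈ Submodule.span (ZMod 2) (({a,b,c} : Finset (K4.E → ZMod 2)) : Set _) :=
    Submodule.subset_span (by simp)
  have hB : b ∈ Submodule.span (ZMod 2) (({a,b,c} : Finset (K4.E → ZMod 2)) : Set _) :=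
    Submodule.subset_span (by simp)
  have hC : c ∈ Submodule.span (ZMod 2) (({a,b,c} : Finset (K4.E → ZMod 2)) : Set _) :=
    Submodule.subset_span (by simp)
  have hspan : Submodule.span (ZMod 2) (({a,b,c} : Finset (K4.E → ZMod 2)) : Set _)
      = K4.cycleSpace := by
    apply le_antisymm
    · rw [Submodule.span_le]
      intro x hx
      exact hmem x (by simpa using hx)
    · intro x hx
      rcases hdec x ((mem_cs x).1 hx) with rfl | rfl | rfl | rfl | rfl | rfl | rfl | rfl
      · exact zero_mem _
      · exact hA
      · exact hB
      · exact hC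
      · exact add_mem hA hB
      · exact add_mem hA hC
      · exact add_mem hB hC
      · exact add_mem (add_mem hA hB) hC
  have hcard : ({a, b, c} : Finset (K4.E → ZMod 2)).card = 3 := by
    rw [Finset.card_insert_of_notMem (by simp [hab, hac]),
      Finset.card_insert_of_notMem (by simp [hbc]), Finset.card_singleton]
  refine ⟨⟨hmem, ?_, hspan⟩, hcard⟩
  rw [linearIndependent_iff_card_eq_finrank_span]
  have hr : Set.range (fun x : ({a,b,c} : Finset (K4.E → ZMod 2)) => (x : K4.E → ZMod 2))
      = (({a,b,c} : Finset (K4.E → ZMod 2)) : Set _) := Subtype.range_coe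
  unfold Set.finrank
  rw [hr, hspan, finrank_cs, Fintype.card_coe, hcard]

end K4Proof
/-- Let `K₄` be drawn in the plane with exactly one crossing `x` (of the
chords `u₀u₂` and `u₁u₃`), and let `C` be the 4-cycle surrounding `x`.  For any assignment `w`
of the multiset `{1,1,2,2}` to the four edges of `C`, there is a basis of the cycle space of
`K₄` consisting of three cycles such that each edge of `C` has charge at most its assigned
number and the two crossing edges have charge at most 3. -/
theorem K4_basis_with_charges (w : Fin 4 → ℕ)
    (hw12 : ∀ i, w i = 1 ∨ w i = 2)
    (hw : (Finset.univ.filter fun i => w i = 1).card = 2) :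
    ∃ B : Finset (K4.E → ZMod 2),
      K4.IsCycleBasis B ∧ B.card = 3 ∧
      (∀ i : Fin 4, K4.charge B (cycleEdge i) ≤ w i) ∧
      K4.charge B ⟨(0, 2), by decide⟩ ≤ 3 ∧
      K4.charge B ⟨(1, 3), by decide⟩ ≤ 3 := by
  open K4Proof in
  have h0 := hw12 0
  have h1 := hw12 1
  have h2 := hw12 2
  have h3 := hw12 3
  rw [Finset.card_filter, Fin.sum_univ_four] at hw
  rcases h0 with h0 | h0 <;> rcases h1 with h1 | h1 <;> rcases h2 with h2 | h2 <;>
    rcases h3 with h3 | h3 <;> simp [h0, h1, h2, h3] at hw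
  · obtain ⟨hbas, hcd⟩ := build t013 t123 t023 (by decide) (by decide) (by decide)
      (by decide) (by decide) (by decide) (by decide)
    refine ⟨_, hbas, hcd, ?_, by decide, by decide⟩
    intro i; fin_cases i
    · exact le_trans (by decide) h0.ge
    · exact le_trans (by decide) h1.ge
    · exact le_trans (by decide) h2.ge
    · exact le_trans (by decide) h3.ge
  · obtain ⟨hbas, hcd⟩ := build q1 t012 t023 (by decide) (by decide) (by decide)
      (by decide) (by decide) (by decide) (by decide)
    refine ⟨_, hbas, hcd, ?_, by decide, by decide⟩
    intro i; fin_cases i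
    · exact le_trans (by decide) h0.ge
    · exact le_trans (by decide) h1.ge
    · exact le_trans (by decide) h2.ge
    · exact le_trans (by decide) h3.ge
  · obtain ⟨hbas, hcd⟩ := build t012 t023 t123 (by decide) (by decide) (by decide)
      (by decide) (by decide) (by decide) (by decide)
    refine ⟨_, hbas, hcd, ?_, by decide, by decide⟩
    intro i; fin_cases i
    · exact le_trans (by decide) h0.ge
    · exact le_trans (by decide) h1.ge
    · exact le_trans (by decide) h2.ge
    · exact le_trans (by decide) h3.ge
  · obtain ⟨hbas, hcd⟩ := build t012 t013 t023 (by decide) (by decide) (by decide)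
      (by decide) (by decide) (by decide) (by decide)
    refine ⟨_, hbas, hcd, ?_, by decide, by decide⟩
    intro i; fin_cases i
    · exact le_trans (by decide) h0.ge
    · exact le_trans (by decide) h1.ge
    · exact le_trans (by decide) h2.ge
    · exact le_trans (by decide) h3.ge
  · obtain ⟨hbas, hcd⟩ := build q2 t123 t013 (by decide) (by decide) (by decide)
      (by decide) (by decide) (by decide) (by decide)
    refine ⟨_, hbas, hcd, ?_, by decide, by decide⟩
    intro i; fin_cases i
    · exact le_trans (by decide) h0.ge
    · exact le_trans (by decide) h1.ge
    · exact le_trans (by decide) h2.ge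
    · exact le_trans (by decide) h3.ge
  · obtain ⟨hbas, hcd⟩ := build t012 t013 t123 (by decide) (by decide) (by decide)
      (by decide) (by decide) (by decide) (by decide)
    refine ⟨_, hbas, hcd, ?_, by decide, by decide⟩
    intro i; fin_cases i
    · exact le_trans (by decide) h0.ge
    · exact le_trans (by decide) h1.ge
    · exact le_trans (by decide) h2.ge
    · exact le_trans (by decide) h3.ge
end
end
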